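/- Let n ≥ 1, let A and B be Hermitian n×n complex matrices all of whose eigenvalues lie in the open interval (−1,1), let f, g ∈ 𝔥, and let X be an arbitrary n×n complex matrix. Then for every unitarily invariant norm N on the 2n×2n complex matrices, N((f(A)Xg(B) + X) ⊕ 0) ≤ (4√2/(d_A d_B)) · N(AXB ⊕ X), where C ⊕ D denotes the 2n×2n block-diagonal matrix with diagonal blocks C and D. -/

import Mathlib

open Matrix
open scoped ComplexOrder

/-- Bound for functions in the class 𝔥. -/
lemma memH_abs_le {f : ℂ → ℂ}
    (hd : DifferentiableOn ℂ f (Metric.ball (0 : ℂ) 1))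
    (hre : ∀ z ∈ Metric.ball (0 : ℂ) 1, 0 < (f z).re) (h0 : f 0 = 1)
    {z : ℂ} (hz : ‖z‖ < 1) :
    ‖(f z)‖ ≤ 2 / (1 - ‖z‖) := by
  have hzball : z ∈ Metric.ball (0 : ℂ) 1 := by
    simpa [Metric.mem_ball, Complex.dist_eq] using hz
  have hne : ∀ w ∈ Metric.ball (0 : ℂ) 1, f w + 1 ≠ 0 := by
    intro w hw h
    have h1 := hre w hw
    have : (f w + 1).re = (f w).re + 1 := by simp
    rw [h] at this
    simp at this
    linarith
  set F : ℂ → ℂ := fun w => (f w - 1) / (f w + 1) with hF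
  have hFd : DifferentiableOn ℂ F (Metric.ball (0 : ℂ) 1) :=
    (hd.sub (differentiableOn_const 1)).div (hd.add (differentiableOn_const 1)) hne
  have hFlt : ∀ w ∈ Metric.ball (0 : ℂ) 1, ‖(F w)‖ < 1 := by
    intro w hw
    have h1 := hre w hw
    have hnum : ‖(f w - 1)‖ < ‖(f w + 1)‖ := by
      have hsq : Complex.normSq (f w - 1) < Complex.normSq (f w + 1) := by
        simp only [Complex.normSq_apply, Complex.sub_re, Complex.sub_im, Complex.add_re,
          Complex.add_im, Complex.one_re, Complex.one_im]
        nlinarith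
      have := Real.sqrt_lt_sqrt (Complex.normSq_nonneg _) hsq
      simpa [Complex.norm_def] using this
    rw [hF]
    simp only [norm_div]
    rw [div_lt_one (norm_pos_iff.mpr (hne w hw))]
    exact hnum
  have hFmaps : Set.MapsTo F (Metric.ball (0 : ℂ) 1) (Metric.ball (0 : ℂ) 1) := by
    intro w hw
    simpa [Metric.mem_ball, Complex.dist_eq] using hFlt w hw
  have hF0 : F 0 = 0 := by simp [hF, h0]
  have hschwarz : ‖(F z)‖ ≤ ‖z‖ :=
    Complex.norm_le_norm_of_mapsTo_ball hFd (hFmaps.mono_right Metric.ball_subset_closedBall) hF0 hz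
  have hFz1 : ‖(F z)‖ < 1 := lt_of_le_of_lt hschwarz hz
  have hden : (1 : ℂ) - F z ≠ 0 := by
    intro h
    have : ‖(F z)‖ = 1 := by
      have : F z = 1 := by linear_combination -h
      simp [this]
    linarith
  have hfz : f z = (1 + F z) / (1 - F z) := by
    have hne' := hne z hzball
    rw [hF]
    field_simp
    ring
  rw [hfz, norm_div]
  have hub : ‖(1 + F z)‖ ≤ 2 := by
    calc ‖(1 + F z)‖ ≤ ‖(1:ℂ)‖ + ‖(F z)‖ := by
          simpa using norm_add_le 1 (F z)
      _ ≤ 2 := by simp; linarith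
  have hlb : 1 - ‖z‖ ≤ ‖(1 - F z)‖ := by
    have h1 : ‖(1:ℂ)‖ - ‖F z‖ ≤ ‖(1:ℂ) - F z‖ := norm_sub_norm_le _ _
    simp only [norm_one] at h1
    linarith
  have hpos : (0:ℝ) < 1 - ‖z‖ := by linarith
  exact div_le_div₀ (by norm_num) hub hpos hlb

/-- Every complex number in the closed unit disk is the average of two unimodular numbers. -/
lemma avg_unimodular (z : ℂ) (hz : ‖z‖ ≤ 1) :
    ∃ u v : ℂ, ‖u‖ = 1 ∧ ‖v‖ = 1 ∧ u + v = 2 * z := by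
  by_cases h : z = 0
  · exact ⟨1, -1, by simp, by simp, by simp [h]⟩
  · set r : ℝ := ‖z‖ with hr
    have hr0 : 0 < r := norm_pos_iff.mpr h
    set s : ℝ := Real.sqrt (1 - r ^ 2) with hs
    set p : ℂ := z / r with hp
    have hpabs : ‖p‖ = 1 := by
      rw [hp, norm_div]
      rw [Complex.norm_real, Real.norm_eq_abs, abs_of_pos hr0, ← hr, div_self hr0.ne']
    have hzrp : z = (r : ℂ) * p := by
      rw [hp]
      field_simp
    have hs2 : s ^ 2 = 1 - r ^ 2 := Real.sq_sqrt (by nlinarith)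
    have key : ∀ t : ℝ, ‖((r : ℂ) + t * Complex.I)‖ ^ 2 = r ^ 2 + t ^ 2 := by
      intro t
      rw [Complex.sq_norm]
      simp [Complex.normSq_apply]
      ring
    refine ⟨((r : ℂ) + s * Complex.I) * p, ((r : ℂ) - s * Complex.I) * p, ?_, ?_, ?_⟩
    · rw [norm_mul, hpabs, mul_one]
      have := key s
      nlinarith [norm_nonneg ((r : ℂ) + s * Complex.I)]
    · rw [norm_mul, hpabs, mul_one]
      have : ((r : ℂ) - s * Complex.I) = (r : ℂ) + (-s) * Complex.I := by ring
      rw [this]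
      have := key (-s)
      push_cast at this
      nlinarith [norm_nonneg ((r : ℂ) + (-s) * Complex.I)]
    · rw [hzrp]; ring

open Matrix
open scoped ComplexOrder

/-- `f(A)` for a Hermitian matrix `A`, defined via the spectral decomposition:
`f(A) = U diag(f(λ₁),…,f(λₙ)) U*`. -/
noncomputable def herFun {n : ℕ} {A : Matrix (Fin n) (Fin n) ℂ} (hA : A.IsHermitian)
    (f : ℂ → ℂ) : Matrix (Fin n) (Fin n) ℂ :=
  (hA.eigenvectorUnitary : Matrix (Fin n) (Fin n) ℂ) *
    Matrix.diagonal (fun i => f (hA.eigenvalues i : ℂ)) *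
    star (hA.eigenvectorUnitary : Matrix (Fin n) (Fin n) ℂ)

/-- `|X| = (X*X)^{1/2}`, the positive semidefinite absolute value of a matrix. -/
noncomputable def matAbs {n : ℕ} (X : Matrix (Fin n) (Fin n) ℂ) : Matrix (Fin n) (Fin n) ℂ :=
  ((Matrix.posSemidef_conjTranspose_mul_self X).isHermitian.eigenvectorUnitary : Matrix (Fin n) (Fin n) ℂ) *
    Matrix.diagonal ((↑) ∘ Real.sqrt ∘ (Matrix.posSemidef_conjTranspose_mul_self X).isHermitian.eigenvalues) *
    (star (Matrix.posSemidef_conjTranspose_mul_self X).isHermitian.eigenvectorUnitary : Matrix (Fin n) (Fin n) ℂ)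

/-- `d_A = min { 1 - |λⱼ| }`, the distance from the unit circle to the spectrum of a
Hermitian matrix `A` whose eigenvalues lie in `(-1,1)`. -/
noncomputable def dDist {n : ℕ} {A : Matrix (Fin n) (Fin n) ℂ} (hA : A.IsHermitian) : ℝ :=
  ⨅ i, (1 - |hA.eigenvalues i|)

/-- Membership in the class `𝔥`: analytic on the open unit disk, positive real part there,
and value `1` at the origin. -/
def MemH (f : ℂ → ℂ) : Prop :=
  DifferentiableOn ℂ f (Metric.ball (0 : ℂ) 1) ∧
    (∀ z ∈ Metric.ball (0 : ℂ) 1, 0 < (f z).re) ∧ f 0 = 1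

/-- A function `N` on `n × n` complex matrices is a unitarily invariant norm. -/
def IsUnitarilyInvariantNorm {m : Type*} [Fintype m] [DecidableEq m]
    (N : Matrix m m ℂ → ℝ) : Prop :=
  (∀ X, N X = 0 ↔ X = 0) ∧
    (∀ (c : ℂ) X, N (c • X) = ‖c‖ * N X) ∧
    (∀ X Y, N (X + Y) ≤ N X + N Y) ∧
    (∀ (U V : Matrix.unitaryGroup m ℂ) (X : Matrix m m ℂ),
      N ((U : Matrix m m ℂ) * X * (V : Matrix m m ℂ)) = N X)

/-- A unitarily invariant norm is nonnegative. -/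
lemma uin_nonneg {m : Type*} [Fintype m] [DecidableEq m] {N : Matrix m m ℂ → ℝ}
    (hN : IsUnitarilyInvariantNorm N) (X : Matrix m m ℂ) : 0 ≤ N X := by
  have h0 : N 0 = 0 := (hN.1 0).2 rfl
  have htri := hN.2.2.1 X (-X)
  have hneg : N (-X) = N X := by
    have := hN.2.1 (-1) X
    simpa using this
  rw [add_neg_cancel, h0, hneg] at htri
  linarith

/-- Block diagonal of unitaries is unitary. -/
lemma blockUnitary {n : ℕ} {U V : Matrix (Fin n) (Fin n) ℂ}
    (hU : U ∈ Matrix.unitaryGroup (Fin n) ℂ) (hV : V ∈ Matrix.unitaryGroup (Fin n) ℂ) :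
    Matrix.fromBlocks U 0 0 V ∈ Matrix.unitaryGroup (Fin n ⊕ Fin n) ℂ := by
  rw [Matrix.mem_unitaryGroup_iff] at hU hV ⊢
  simp only [Matrix.star_eq_conjTranspose] at hU hV ⊢
  rw [Matrix.fromBlocks_conjTranspose, Matrix.fromBlocks_multiply]
  simp [hU, hV]

/-- Unimodular diagonal matrices are unitary. -/
lemma diagUnitary {n : ℕ} {u : Fin n → ℂ} (hu : ∀ i, ‖(u i)‖ = 1) :
    Matrix.diagonal u ∈ Matrix.unitaryGroup (Fin n) ℂ := by
  rw [Matrix.mem_unitaryGroup_iff]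
  simp only [Matrix.star_eq_conjTranspose, Matrix.diagonal_conjTranspose,
    Matrix.diagonal_mul_diagonal]
  have : (fun i => u i * (star u) i) = fun _ => (1 : ℂ) := by
    funext i
    have : u i * star (u i) = ((Complex.normSq (u i) : ℝ) : ℂ) := Complex.mul_conj (u i)
    rw [Pi.star_apply, this, Complex.normSq_eq_norm_sq, hu i]
    norm_num
  rw [this, Matrix.diagonal_one]

/-- **Remark 2.2, Hermitian matrix case.** -/
theorem stmt2 {n : ℕ} (hn : 1 ≤ n)
    {A B : Matrix (Fin n) (Fin n) ℂ} (hA : A.IsHermitian) (hB : B.IsHermitian)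
    (hAspec : ∀ i, |hA.eigenvalues i| < 1) (hBspec : ∀ i, |hB.eigenvalues i| < 1)
    {f g : ℂ → ℂ} (hf : MemH f) (hg : MemH g)
    (X : Matrix (Fin n) (Fin n) ℂ)
    (N : Matrix (Fin n ⊕ Fin n) (Fin n ⊕ Fin n) ℂ → ℝ) (hN : IsUnitarilyInvariantNorm N) :
    N (Matrix.fromBlocks (herFun hA f * X * herFun hB g + X) 0 0 0) ≤
      (4 * Real.sqrt 2 / (dDist hA * dDist hB)) *
        N (Matrix.fromBlocks (A * X * B) 0 0 X) := by
  obtain ⟨hNdef, hNsmul, hNtri, hNuni⟩ := hN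
  haveI : Nonempty (Fin n) := ⟨⟨0, hn⟩⟩
  set UA : Matrix (Fin n) (Fin n) ℂ := (hA.eigenvectorUnitary : Matrix (Fin n) (Fin n) ℂ)
    with hUAdef
  set UB : Matrix (Fin n) (Fin n) ℂ := (hB.eigenvectorUnitary : Matrix (Fin n) (Fin n) ℂ)
    with hUBdef
  have hUAmem : UA ∈ Matrix.unitaryGroup (Fin n) ℂ := hA.eigenvectorUnitary.prop
  have hUBmem : UB ∈ Matrix.unitaryGroup (Fin n) ℂ := hB.eigenvectorUnitary.prop
  -- invariance under block-diagonal unitary conjugation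
  have conjN : ∀ (U V : Matrix (Fin n) (Fin n) ℂ), U ∈ Matrix.unitaryGroup (Fin n) ℂ →
      V ∈ Matrix.unitaryGroup (Fin n) ℂ → ∀ Y : Matrix (Fin n) (Fin n) ℂ,
      N (Matrix.fromBlocks (U * Y * V) 0 0 0) = N (Matrix.fromBlocks Y 0 0 0) := by
    intro U V hU hV Y
    have h1mem : (1 : Matrix (Fin n) (Fin n) ℂ) ∈ Matrix.unitaryGroup (Fin n) ℂ :=
      Submonoid.one_mem _
    have h1 := hNuni ⟨_, blockUnitary hU h1mem⟩ ⟨_, blockUnitary hV h1mem⟩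
      (Matrix.fromBlocks Y 0 0 0)
    rw [← h1]
    congr 1
    simp [Matrix.fromBlocks_multiply]
  -- swap the two diagonal blocks
  have swapN : ∀ Y : Matrix (Fin n) (Fin n) ℂ,
      N (Matrix.fromBlocks 0 0 0 Y) = N (Matrix.fromBlocks Y 0 0 0) := by
    intro Y
    have hS : Matrix.fromBlocks (0 : Matrix (Fin n) (Fin n) ℂ) 1 1 0 ∈
        Matrix.unitaryGroup (Fin n ⊕ Fin n) ℂ := by
      rw [Matrix.mem_unitaryGroup_iff]
      simp only [Matrix.star_eq_conjTranspose, Matrix.fromBlocks_conjTranspose]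
      simp [Matrix.fromBlocks_multiply]
    have h1 := hNuni ⟨_, hS⟩ ⟨_, hS⟩ (Matrix.fromBlocks 0 0 0 Y)
    rw [← h1]
    congr 1
    simp [Matrix.fromBlocks_multiply]
  -- pinching: N(0 ⊕ Y) ≤ N(C ⊕ Y)
  have pinchN : ∀ C Y : Matrix (Fin n) (Fin n) ℂ,
      N (Matrix.fromBlocks 0 0 0 Y) ≤ N (Matrix.fromBlocks C 0 0 Y) := by
    intro C Y
    have h1mem : (1 : Matrix (Fin n) (Fin n) ℂ) ∈ Matrix.unitaryGroup (Fin n) ℂ :=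
      Submonoid.one_mem _
    have hJmem : (-1 : Matrix (Fin n) (Fin n) ℂ) ∈ Matrix.unitaryGroup (Fin n) ℂ := by
      rw [Matrix.mem_unitaryGroup_iff]
      simp
    have hJ := hNuni ⟨_, blockUnitary hJmem h1mem⟩ 1 (Matrix.fromBlocks C 0 0 Y)
    have hJ' : N (Matrix.fromBlocks (-C) 0 0 Y) = N (Matrix.fromBlocks C 0 0 Y) := by
      rw [← hJ]
      congr 1
      simp [Matrix.fromBlocks_multiply]
    have heq : Matrix.fromBlocks (0 : Matrix (Fin n) (Fin n) ℂ) 0 0 Y =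
        ((1:ℂ)/2) • (Matrix.fromBlocks C 0 0 Y + Matrix.fromBlocks (-C) 0 0 Y) := by
      rw [Matrix.fromBlocks_add, Matrix.fromBlocks_smul]
      congr 1 <;> simp
      module
    calc N (Matrix.fromBlocks (0 : Matrix (Fin n) (Fin n) ℂ) 0 0 Y)
        = ‖(1:ℂ)/2‖ * N (Matrix.fromBlocks C 0 0 Y + Matrix.fromBlocks (-C) 0 0 Y) := by
          rw [heq, hNsmul]
      _ ≤ ‖(1:ℂ)/2‖ * (N (Matrix.fromBlocks C 0 0 Y) + N (Matrix.fromBlocks (-C) 0 0 Y)) := by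
          have := hNtri (Matrix.fromBlocks C 0 0 Y) (Matrix.fromBlocks (-C) 0 0 Y)
          have hn2 : (0:ℝ) ≤ ‖(1:ℂ)/2‖ := norm_nonneg _
          exact mul_le_mul_of_nonneg_left this hn2
      _ = N (Matrix.fromBlocks C 0 0 Y) := by
          rw [hJ']
          have : ‖(1:ℂ)/2‖ = 1/2 := by norm_num
          rw [this]; ring
  -- scaling by bounded diagonal matrices
  have diagN : ∀ (d e : Fin n → ℂ) (c₁ c₂ : ℝ), 0 < c₁ → 0 < c₂ →
      (∀ i, ‖(d i)‖ ≤ c₁) → (∀ i, ‖(e i)‖ ≤ c₂) →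
      ∀ Y : Matrix (Fin n) (Fin n) ℂ,
      N (Matrix.fromBlocks (Matrix.diagonal d * Y * Matrix.diagonal e) 0 0 0)
        ≤ c₁ * c₂ * N (Matrix.fromBlocks Y 0 0 0) := by
    intro d e c₁ c₂ hc₁ hc₂ hd he Y
    have hc₁' : ((c₁:ℝ):ℂ) ≠ 0 := Complex.ofReal_ne_zero.mpr hc₁.ne'
    have hc₂' : ((c₂:ℝ):ℂ) ≠ 0 := Complex.ofReal_ne_zero.mpr hc₂.ne'
    have h1 : ∀ i, ∃ u v : ℂ, ‖u‖ = 1 ∧ ‖v‖ = 1 ∧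
        u + v = 2 * (d i / (c₁:ℂ)) := by
      intro i
      apply avg_unimodular
      rw [norm_div, Complex.norm_real, Real.norm_eq_abs, abs_of_pos hc₁, div_le_one hc₁]
      exact hd i
    have h2 : ∀ i, ∃ u v : ℂ, ‖u‖ = 1 ∧ ‖v‖ = 1 ∧
        u + v = 2 * (e i / (c₂:ℂ)) := by
      intro i
      apply avg_unimodular
      rw [norm_div, Complex.norm_real, Real.norm_eq_abs, abs_of_pos hc₂, div_le_one hc₂]
      exact he i
    choose u₁ v₁ hu₁ hv₁ huv₁ using h1
    choose u₂ v₂ hu₂ hv₂ huv₂ using h2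
    have hdeq : Matrix.diagonal d =
        ((c₁:ℂ)/2) • (Matrix.diagonal u₁ + Matrix.diagonal v₁) := by
      ext i j
      by_cases hij : i = j
      · subst hij
        simp only [Matrix.smul_apply, Matrix.add_apply, Matrix.diagonal_apply_eq, smul_eq_mul]
        rw [huv₁ i]
        field_simp
      · simp [Matrix.diagonal_apply_ne _ hij]
    have heeq : Matrix.diagonal e =
        ((c₂:ℂ)/2) • (Matrix.diagonal u₂ + Matrix.diagonal v₂) := by
      ext i j
      by_cases hij : i = j
      · subst hij
        simp only [Matrix.smul_apply, Matrix.add_apply, Matrix.diagonal_apply_eq, smul_eq_mul]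
        rw [huv₂ i]
        field_simp
      · simp [Matrix.diagonal_apply_ne _ hij]
    set P₁ := Matrix.diagonal u₁
    set P₂ := Matrix.diagonal v₁
    set Q₁ := Matrix.diagonal u₂
    set Q₂ := Matrix.diagonal v₂
    have hexp : Matrix.diagonal d * Y * Matrix.diagonal e
        = ((c₁:ℂ)/2 * ((c₂:ℂ)/2)) • (P₁ * Y * Q₁ + P₁ * Y * Q₂ + P₂ * Y * Q₁ + P₂ * Y * Q₂) := by
      rw [hdeq, heeq]
      simp only [smul_mul_assoc, mul_smul_comm, add_mul, mul_add, smul_smul, smul_add]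
      module
    have hsmulblock : ∀ (c : ℂ) (C : Matrix (Fin n) (Fin n) ℂ),
        (Matrix.fromBlocks (c • C) 0 0 0 : Matrix (Fin n ⊕ Fin n) (Fin n ⊕ Fin n) ℂ) =
          c • Matrix.fromBlocks C 0 0 0 := by
      intro c C
      rw [Matrix.fromBlocks_smul]
      congr 1 <;> simp
    have haddblock : ∀ (C D : Matrix (Fin n) (Fin n) ℂ),
        (Matrix.fromBlocks (C + D) 0 0 0 : Matrix (Fin n ⊕ Fin n) (Fin n ⊕ Fin n) ℂ) =
          Matrix.fromBlocks C 0 0 0 + Matrix.fromBlocks D 0 0 0 := by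
      intro C D
      rw [Matrix.fromBlocks_add]
      congr 1 <;> simp
    have hterm : ∀ (P Q : Matrix (Fin n) (Fin n) ℂ), P ∈ Matrix.unitaryGroup (Fin n) ℂ →
        Q ∈ Matrix.unitaryGroup (Fin n) ℂ →
        N (Matrix.fromBlocks (P * Y * Q) 0 0 0) = N (Matrix.fromBlocks Y 0 0 0) :=
      fun P Q hP hQ => conjN P Q hP hQ Y
    have hP₁ := diagUnitary hu₁
    have hP₂ := diagUnitary hv₁
    have hQ₁ := diagUnitary hu₂
    have hQ₂ := diagUnitary hv₂
    have hnormc : ‖((c₁:ℂ)/2 * ((c₂:ℂ)/2))‖ = c₁/2 * (c₂/2) := by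
      rw [norm_mul]
      have e1 : ‖(c₁:ℂ)/2‖ = c₁/2 := by
        rw [norm_div]
        simp [abs_of_pos hc₁]
      have e2 : ‖(c₂:ℂ)/2‖ = c₂/2 := by
        rw [norm_div]
        simp [abs_of_pos hc₂]
      rw [e1, e2]
    calc N (Matrix.fromBlocks (Matrix.diagonal d * Y * Matrix.diagonal e) 0 0 0)
        = (c₁/2 * (c₂/2)) * N (Matrix.fromBlocks
            (P₁ * Y * Q₁ + P₁ * Y * Q₂ + P₂ * Y * Q₁ + P₂ * Y * Q₂) 0 0 0) := by
          rw [hexp, hsmulblock, hNsmul, hnormc]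
      _ ≤ (c₁/2 * (c₂/2)) * (4 * N (Matrix.fromBlocks Y 0 0 0)) := by
          apply mul_le_mul_of_nonneg_left _ (by positivity)
          rw [haddblock, haddblock, haddblock]
          calc N (Matrix.fromBlocks (P₁ * Y * Q₁) 0 0 0 + Matrix.fromBlocks (P₁ * Y * Q₂) 0 0 0
                + Matrix.fromBlocks (P₂ * Y * Q₁) 0 0 0 + Matrix.fromBlocks (P₂ * Y * Q₂) 0 0 0)
              ≤ N (Matrix.fromBlocks (P₁ * Y * Q₁) 0 0 0 + Matrix.fromBlocks (P₁ * Y * Q₂) 0 0 0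
                + Matrix.fromBlocks (P₂ * Y * Q₁) 0 0 0)
                + N (Matrix.fromBlocks (P₂ * Y * Q₂) 0 0 0) := hNtri _ _
            _ ≤ N (Matrix.fromBlocks (P₁ * Y * Q₁) 0 0 0 + Matrix.fromBlocks (P₁ * Y * Q₂) 0 0 0)
                + N (Matrix.fromBlocks (P₂ * Y * Q₁) 0 0 0)
                + N (Matrix.fromBlocks (P₂ * Y * Q₂) 0 0 0) := by
                  have := hNtri (Matrix.fromBlocks (P₁ * Y * Q₁) 0 0 0
                    + Matrix.fromBlocks (P₁ * Y * Q₂) 0 0 0)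
                    (Matrix.fromBlocks (P₂ * Y * Q₁) 0 0 0)
                  linarith
            _ ≤ N (Matrix.fromBlocks (P₁ * Y * Q₁) 0 0 0)
                + N (Matrix.fromBlocks (P₁ * Y * Q₂) 0 0 0)
                + N (Matrix.fromBlocks (P₂ * Y * Q₁) 0 0 0)
                + N (Matrix.fromBlocks (P₂ * Y * Q₂) 0 0 0) := by
                  have := hNtri (Matrix.fromBlocks (P₁ * Y * Q₁) 0 0 0)
                    (Matrix.fromBlocks (P₁ * Y * Q₂) 0 0 0)
                  linarith
            _ = 4 * N (Matrix.fromBlocks Y 0 0 0) := by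
                  rw [hterm P₁ Q₁ hP₁ hQ₁, hterm P₁ Q₂ hP₁ hQ₂, hterm P₂ Q₁ hP₂ hQ₁,
                    hterm P₂ Q₂ hP₂ hQ₂]
                  ring
      _ = c₁ * c₂ * N (Matrix.fromBlocks Y 0 0 0) := by ring
  -- eigenvalue bounds
  have hdA_le : ∀ i, dDist hA ≤ 1 - |hA.eigenvalues i| := fun i =>
    ciInf_le (Set.Finite.bddBelow (Set.finite_range _)) i
  have hdB_le : ∀ i, dDist hB ≤ 1 - |hB.eigenvalues i| := fun i =>
    ciInf_le (Set.Finite.bddBelow (Set.finite_range _)) i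
  obtain ⟨iA, hiA⟩ := Finite.exists_min (fun i => 1 - |hA.eigenvalues i|)
  obtain ⟨iB, hiB⟩ := Finite.exists_min (fun i => 1 - |hB.eigenvalues i|)
  have hdA_pos : 0 < dDist hA := by
    have h1 : (0:ℝ) < 1 - |hA.eigenvalues iA| := by have := hAspec iA; linarith
    exact lt_of_lt_of_le h1 (le_ciInf hiA)
  have hdB_pos : 0 < dDist hB := by
    have h1 : (0:ℝ) < 1 - |hB.eigenvalues iB| := by have := hBspec iB; linarith
    exact lt_of_lt_of_le h1 (le_ciInf hiB)
  have hdA_le1 : dDist hA ≤ 1 := by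
    have := hdA_le iA
    have := abs_nonneg (hA.eigenvalues iA)
    linarith
  have hdB_le1 : dDist hB ≤ 1 := by
    have := hdB_le iB
    have := abs_nonneg (hB.eigenvalues iB)
    linarith
  have hfb : ∀ i, ‖(f (hA.eigenvalues i : ℂ))‖ ≤ 2 / dDist hA := by
    intro i
    have habs : ‖((hA.eigenvalues i : ℝ) : ℂ)‖ < 1 := by
      rw [Complex.norm_real, Real.norm_eq_abs]; exact hAspec i
    have h1 := memH_abs_le hf.1 hf.2.1 hf.2.2 habs
    rw [Complex.norm_real, Real.norm_eq_abs] at h1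
    have h2 : (0:ℝ) < 1 - |hA.eigenvalues i| := by have := hAspec i; linarith
    calc ‖(f (hA.eigenvalues i : ℂ))‖ ≤ 2 / (1 - |hA.eigenvalues i|) := h1
      _ ≤ 2 / dDist hA := by
          apply div_le_div_of_nonneg_left (by norm_num) hdA_pos (hdA_le i)
  have hgb : ∀ i, ‖(g (hB.eigenvalues i : ℂ))‖ ≤ 2 / dDist hB := by
    intro i
    have habs : ‖((hB.eigenvalues i : ℝ) : ℂ)‖ < 1 := by
      rw [Complex.norm_real, Real.norm_eq_abs]; exact hBspec i
    have h1 := memH_abs_le hg.1 hg.2.1 hg.2.2 habs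
    rw [Complex.norm_real, Real.norm_eq_abs] at h1
    have h2 : (0:ℝ) < 1 - |hB.eigenvalues i| := by have := hBspec i; linarith
    calc ‖(g (hB.eigenvalues i : ℂ))‖ ≤ 2 / (1 - |hB.eigenvalues i|) := h1
      _ ≤ 2 / dDist hB := by
          apply div_le_div_of_nonneg_left (by norm_num) hdB_pos (hdB_le i)
  -- rearrange herFun product
  set Df : Matrix (Fin n) (Fin n) ℂ := Matrix.diagonal (fun i => f (hA.eigenvalues i : ℂ))
    with hDf
  set Dg : Matrix (Fin n) (Fin n) ℂ := Matrix.diagonal (fun i => g (hB.eigenvalues i : ℂ))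
    with hDg
  set Y : Matrix (Fin n) (Fin n) ℂ := star UA * X * UB with hY
  have hfA : herFun hA f * X * herFun hB g = UA * (Df * Y * Dg) * star UB := by
    simp only [herFun, hY, ← hUAdef, ← hUBdef, ← hDf, ← hDg, Matrix.mul_assoc]
  have e1 : N (Matrix.fromBlocks (herFun hA f * X * herFun hB g) 0 0 0)
      = N (Matrix.fromBlocks (Df * Y * Dg) 0 0 0) := by
    rw [hfA]
    exact conjN UA (star UB) hUAmem (Unitary.star_mem hUBmem) _
  have e2 : N (Matrix.fromBlocks Y 0 0 0) = N (Matrix.fromBlocks X 0 0 0) := by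
    rw [hY]
    exact conjN (star UA) UB (Unitary.star_mem hUAmem) hUBmem X
  have e3 : N (Matrix.fromBlocks (Df * Y * Dg) 0 0 0)
      ≤ (2 / dDist hA) * (2 / dDist hB) * N (Matrix.fromBlocks Y 0 0 0) :=
    diagN _ _ _ _ (by positivity) (by positivity) hfb hgb Y
  have e4 : N (Matrix.fromBlocks X 0 0 0) ≤ N (Matrix.fromBlocks (A * X * B) 0 0 X) := by
    rw [← swapN X]
    exact pinchN (A * X * B) X
  have e5 : (Matrix.fromBlocks (herFun hA f * X * herFun hB g + X) 0 0 0 :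
      Matrix (Fin n ⊕ Fin n) (Fin n ⊕ Fin n) ℂ) =
      Matrix.fromBlocks (herFun hA f * X * herFun hB g) 0 0 0 + Matrix.fromBlocks X 0 0 0 := by
    rw [Matrix.fromBlocks_add]
    congr 1 <;> simp
  set K : ℝ := (2 / dDist hA) * (2 / dDist hB) + 1 with hK
  have hmain : N (Matrix.fromBlocks (herFun hA f * X * herFun hB g + X) 0 0 0)
      ≤ K * N (Matrix.fromBlocks X 0 0 0) := by
    calc N (Matrix.fromBlocks (herFun hA f * X * herFun hB g + X) 0 0 0)
        ≤ N (Matrix.fromBlocks (herFun hA f * X * herFun hB g) 0 0 0)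
          + N (Matrix.fromBlocks X 0 0 0) := by rw [e5]; exact hNtri _ _
      _ ≤ (2 / dDist hA) * (2 / dDist hB) * N (Matrix.fromBlocks X 0 0 0)
          + N (Matrix.fromBlocks X 0 0 0) := by
            have := e3
            rw [e2] at this
            rw [e1]
            linarith
      _ = K * N (Matrix.fromBlocks X 0 0 0) := by rw [hK]; ring
  have hKbound : K ≤ 4 * Real.sqrt 2 / (dDist hA * dDist hB) := by
    have hab : 0 < dDist hA * dDist hB := mul_pos hdA_pos hdB_pos
    have hsq : (1.25:ℝ) ≤ Real.sqrt 2 := by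
      nlinarith [Real.sq_sqrt (show (0:ℝ) ≤ 2 by norm_num), Real.sqrt_nonneg 2]
    have hab1 : dDist hA * dDist hB ≤ 1 := by nlinarith
    have key : (2 / dDist hA * (2 / dDist hB) + 1) * (dDist hA * dDist hB)
        = 4 + dDist hA * dDist hB := by field_simp; ring
    rw [hK, le_div_iff₀ hab, key]
    nlinarith
  have hN1 : 0 ≤ N (Matrix.fromBlocks (A * X * B) 0 0 X) :=
    uin_nonneg ⟨hNdef, hNsmul, hNtri, hNuni⟩ _
  have hKpos : 0 ≤ K := by positivity
  calc N (Matrix.fromBlocks (herFun hA f * X * herFun hB g + X) 0 0 0)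
      ≤ K * N (Matrix.fromBlocks X 0 0 0) := hmain
    _ ≤ K * N (Matrix.fromBlocks (A * X * B) 0 0 X) := mul_le_mul_of_nonneg_left e4 hKpos
    _ ≤ 4 * Real.sqrt 2 / (dDist hA * dDist hB) * N (Matrix.fromBlocks (A * X * B) 0 0 X) :=
        mul_le_mul_of_nonneg_right hKbound hN1
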